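/- For n = 3 and any nonnegative integer a, the constant term of ∏_{1 ≤ i ≠ j ≤ 3} (1 - z_i/z_j)^a in the Laurent polynomial ring ℚ[z₁^{±1}, z₂^{±1}, z₃^{±1}] equals (3a)!/(a!)³. -/

import Mathlib

open AddMonoidAlgebra Finset

noncomputable section DysonAux

abbrev R3 := AddMonoidAlgebra ℚ (Fin 3 → ℤ)

def ee (i : Fin 3) : Fin 3 → ℤ := Pi.single i 1

def tt (i : Fin 3) : R3 := AddMonoidAlgebra.single (ee i) 1

def ff (i j : Fin 3) : R3 := 1 - AddMonoidAlgebra.single (ee i - ee j) (1 : ℚ)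

lemma ee_apply (i j : Fin 3) : ee i j = if j = i then 1 else 0 := Pi.single_apply i 1 j

lemma key_tk (j k : Fin 3) : tt k * ff j k = tt k - tt j := by
  simp only [tt, ff, mul_sub, mul_one, AddMonoidAlgebra.single_mul_single, one_mul]
  congr 2
  abel

lemma isUnit_single (w : Fin 3 → ℤ) : IsUnit (AddMonoidAlgebra.single w (1 : ℚ) : R3) := by
  refine ⟨⟨AddMonoidAlgebra.single w 1, AddMonoidAlgebra.single (-w) 1, ?_, ?_⟩, rfl⟩ <;>
    simp [AddMonoidAlgebra.single_mul_single, AddMonoidAlgebra.one_def]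

lemma hrec : ff 0 1 * ff 0 2 * ff 1 0 * ff 1 2 * ff 2 0 * ff 2 1 =
    ff 1 0 * ff 1 2 * ff 2 0 * ff 2 1 + ff 0 1 * ff 0 2 * ff 2 0 * ff 2 1 +
      ff 0 1 * ff 0 2 * ff 1 0 * ff 1 2 := by
  have hq : IsUnit (tt 0 * tt 0 * tt 1 * tt 1 * tt 2 * tt 2) := by
    simp only [tt]
    exact (((((isUnit_single _).mul (isUnit_single _)).mul (isUnit_single _)).mul
      (isUnit_single _)).mul (isUnit_single _)).mul (isUnit_single _)
  apply hq.mul_left_cancel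
  have h01 := key_tk 0 1
  have h02 := key_tk 0 2
  have h10 := key_tk 1 0
  have h12 := key_tk 1 2
  have h20 := key_tk 2 0
  have h21 := key_tk 2 1
  calc tt 0 * tt 0 * tt 1 * tt 1 * tt 2 * tt 2 *
        (ff 0 1 * ff 0 2 * ff 1 0 * ff 1 2 * ff 2 0 * ff 2 1)
      = (tt 1 * ff 0 1) * (tt 2 * ff 0 2) * (tt 0 * ff 1 0) * (tt 2 * ff 1 2) *
        (tt 0 * ff 2 0) * (tt 1 * ff 2 1) := by ring
    _ = (tt 1 - tt 0) * (tt 2 - tt 0) * (tt 0 - tt 1) * (tt 2 - tt 1) *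
        (tt 0 - tt 2) * (tt 1 - tt 2) := by rw [h01, h02, h10, h12, h20, h21]
    _ = tt 1 * tt 2 * ((tt 0 - tt 1) * (tt 2 - tt 1) * (tt 0 - tt 2) * (tt 1 - tt 2)) +
        tt 0 * tt 2 * ((tt 1 - tt 0) * (tt 2 - tt 0) * (tt 0 - tt 2) * (tt 1 - tt 2)) +
        tt 0 * tt 1 * ((tt 1 - tt 0) * (tt 2 - tt 0) * (tt 0 - tt 1) * (tt 2 - tt 1)) := by
        ring
    _ = tt 1 * tt 2 * ((tt 0 * ff 1 0) * (tt 2 * ff 1 2) * (tt 0 * ff 2 0) * (tt 1 * ff 2 1)) +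
        tt 0 * tt 2 * ((tt 1 * ff 0 1) * (tt 2 * ff 0 2) * (tt 0 * ff 2 0) * (tt 1 * ff 2 1)) +
        tt 0 * tt 1 * ((tt 1 * ff 0 1) * (tt 2 * ff 0 2) * (tt 0 * ff 1 0) * (tt 2 * ff 1 2)) := by
        rw [h01, h02, h10, h12, h20, h21]
    _ = _ := by ring

def FF (a b c : ℕ) : R3 :=
  ff 0 1 ^ a * ff 0 2 ^ a * ff 1 0 ^ b * ff 1 2 ^ b * ff 2 0 ^ c * ff 2 1 ^ c

lemma FF_rec (a b c : ℕ) : FF (a+1) (b+1) (c+1) =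
    FF a (b+1) (c+1) + FF (a+1) b (c+1) + FF (a+1) (b+1) c := by
  have h : FF (a+1) (b+1) (c+1) =
      FF a b c * (ff 0 1 * ff 0 2 * ff 1 0 * ff 1 2 * ff 2 0 * ff 2 1) := by
    unfold FF; ring
  rw [h, hrec]
  unfold FF; ring

open scoped Classical in
lemma supp_mul_le {P Q S : (Fin 3 → ℤ) → Prop}
    (hPQ : ∀ {x y}, P x → Q y → S (x + y)) {f g : R3}
    (hf : ∀ v ∈ f.coeff.support, P v) (hg : ∀ v ∈ g.coeff.support, Q v) :
    ∀ v ∈ (f * g).coeff.support, S v := by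
  intro v hv
  have := AddMonoidAlgebra.support_coeff_mul_subset f g hv
  rw [Finset.mem_add] at this
  obtain ⟨x, hx, y, hy, rfl⟩ := this
  exact hPQ (hf x hx) (hg y hy)

lemma supp_f (w : Fin 3 → ℤ) :
    ∀ v ∈ (1 - AddMonoidAlgebra.single w (1:ℚ) : R3).coeff.support, v = 0 ∨ v = w := by
  intro v hv
  have h1 : (1 : R3) = AddMonoidAlgebra.single 0 1 := rfl
  have h2 := Finsupp.support_sub (f := (1 : R3).coeff) (g := (AddMonoidAlgebra.single w (1:ℚ)).coeff) hv
  rw [Finset.mem_union] at h2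
  rcases h2 with h | h
  · left
    rw [h1] at h
    have := Finsupp.support_single_subset h
    simpa using this
  · right
    have := Finsupp.support_single_subset h
    simpa using this

lemma supp_pow_nonpos (i : Fin 3) (w : Fin 3 → ℤ) (hw : w i ≤ 0) (m : ℕ) :
    ∀ v ∈ ((1 - AddMonoidAlgebra.single w (1:ℚ) : R3) ^ m).coeff.support, v i ≤ 0 := by
  induction m with
  | zero =>
    intro v hv
    simp only [pow_zero] at hv
    have h1 : (1 : R3) = AddMonoidAlgebra.single 0 1 := rfl
    rw [h1] at hv
    have := Finsupp.support_single_subset hv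
    simp at this
    simp [this]
  | succ m ih =>
    rw [pow_succ]
    refine supp_mul_le (P := fun v => v i ≤ 0) (Q := fun v => v i ≤ 0) ?_ ih ?_
    · intro x y hx hy
      have : (x + y) i = x i + y i := rfl
      omega
    · intro v hv
      rcases supp_f w v hv with rfl | rfl
      · simp
      · exact hw

lemma supp_pow_coord (i : Fin 3) (w : Fin 3 → ℤ) (hw : w i = 0) (m : ℕ) :
    ∀ v ∈ ((1 - AddMonoidAlgebra.single w (1:ℚ) : R3) ^ m).coeff.support, v i = 0 := by
  induction m with
  | zero =>
    intro v hv
    simp only [pow_zero] at hv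
    have h1 : (1 : R3) = AddMonoidAlgebra.single 0 1 := rfl
    rw [h1] at hv
    have := Finsupp.support_single_subset hv
    simp at this
    simp [this]
  | succ m ih =>
    rw [pow_succ]
    refine supp_mul_le (P := fun v => v i = 0) (Q := fun v => v i = 0) ?_ ih ?_
    · intro x y hx hy
      have : (x + y) i = x i + y i := rfl
      omega
    · intro v hv
      rcases supp_f w v hv with rfl | rfl
      · simp
      · exact hw

lemma supp_pow_sub_one_neg (i : Fin 3) (w : Fin 3 → ℤ) (hw : w i < 0) (m : ℕ) :
    ∀ v ∈ ((1 - AddMonoidAlgebra.single w (1:ℚ) : R3) ^ m - 1).coeff.support, v i < 0 := by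
  induction m with
  | zero => intro v hv; simp at hv
  | succ m ih =>
    set X : R3 := 1 - AddMonoidAlgebra.single w (1:ℚ) with hX
    intro v hv
    have hdec : X ^ (m+1) - 1 = (X ^ m - 1) * X + (X - 1) := by ring
    rw [hdec] at hv
    have := Finsupp.support_add hv
    rw [Finset.mem_union] at this
    rcases this with h | h
    · refine supp_mul_le (P := fun v => v i < 0) (Q := fun v => v i ≤ 0)
        (S := fun v => v i < 0) ?_ ih ?_ v h
      · intro x y hx hy
        have : (x + y) i = x i + y i := rfl
        omega
      · intro v hv
        rcases supp_f w v hv with rfl | rfl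
        · simp
        · exact hw.le
    · have hX1 : X - 1 = -AddMonoidAlgebra.single w (1:ℚ) := by rw [hX]; ring
      rw [hX1] at h
      change v ∈ (-(AddMonoidAlgebra.single w (1:ℚ)).coeff).support at h
      rw [Finsupp.support_neg] at h
      have := Finsupp.support_single_subset h
      simp only [Finset.mem_singleton] at this
      subst this; exact hw

lemma ct_boundary (i : Fin 3) (G : R3) (hG : ∀ v ∈ G.coeff.support, v i = 0)
    (w1 w2 : Fin 3 → ℤ) (h1 : w1 i < 0) (h2 : w2 i < 0) (m n : ℕ) :
    (G * ((1 - AddMonoidAlgebra.single w1 (1:ℚ)) ^ m *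
      (1 - AddMonoidAlgebra.single w2 (1:ℚ)) ^ n)).coeff 0 = G.coeff 0 := by
  set X : R3 := 1 - AddMonoidAlgebra.single w1 (1:ℚ)
  set Y : R3 := 1 - AddMonoidAlgebra.single w2 (1:ℚ)
  have hsplit : G * (X ^ m * Y ^ n) = G + (G * (Y ^ n - 1) + G * ((X ^ m - 1) * Y ^ n)) := by
    ring
  rw [hsplit, AddMonoidAlgebra.coeff_add, Finsupp.add_apply, AddMonoidAlgebra.coeff_add,
    Finsupp.add_apply]
  have hz : ∀ (A : R3), (∀ v ∈ A.coeff.support, v i < 0) → A.coeff 0 = 0 := by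
    intro A hA
    by_contra h
    have : (0 : Fin 3 → ℤ) ∈ A.coeff.support := Finsupp.mem_support_iff.mpr h
    have := hA 0 this
    simp at this
  have e1 : (G * (Y ^ n - 1)).coeff 0 = 0 := by
    refine hz _ (supp_mul_le (P := fun v => v i = 0) (Q := fun v => v i < 0) ?_ hG
      (supp_pow_sub_one_neg i w2 h2 n))
    intro x y hx hy
    have : (x + y) i = x i + y i := rfl
    omega
  have e2 : (G * ((X ^ m - 1) * Y ^ n)).coeff 0 = 0 := by
    refine hz _ (supp_mul_le (P := fun v => v i = 0) (Q := fun v => v i < 0) ?_ hG ?_)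
    · intro x y hx hy
      have : (x + y) i = x i + y i := rfl
      omega
    · exact supp_mul_le (P := fun v => v i < 0) (Q := fun v => v i ≤ 0)
        (S := fun v => v i < 0)
        (fun {x y} hx hy => by have : (x + y) i = x i + y i := rfl; omega)
        (supp_pow_sub_one_neg i w1 h1 m) (supp_pow_nonpos i w2 h2.le n)
  rw [e1, e2]; ring

lemma neg_one_single : (-1 : R3) = AddMonoidAlgebra.single 0 (-1 : ℚ) := by
  rw [show (-1 : R3) = -(1 : R3) from rfl, AddMonoidAlgebra.one_def, ← AddMonoidAlgebra.single_neg]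

lemma apply_pow_one_sub_single (w : Fin 3 → ℤ) (j : Fin 3) (hw : w j = 1) (N n : ℕ)
    (hn : n ≤ N) :
    ((1 - AddMonoidAlgebra.single w (1:ℚ) : R3) ^ N).coeff ((n : ℤ) • w) =
      (-1) ^ n * (N.choose n : ℚ) := by
  rw [sub_pow]
  rw [AddMonoidAlgebra.coeff_sum, Finset.sum_apply']
  have hterm : ∀ l, ((-1 : R3) ^ (l + N) * 1 ^ l * (AddMonoidAlgebra.single w (1:ℚ)) ^ (N - l) *
      (N.choose l : R3)) = AddMonoidAlgebra.single (((N - l : ℕ) : ℤ) • w)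
        ((-1) ^ (l + N) * (N.choose l : ℚ)) := by
    intro l
    rw [AddMonoidAlgebra.single_pow, one_pow, AddMonoidAlgebra.natCast_def, neg_one_single,
      AddMonoidAlgebra.single_pow, one_pow, mul_one, AddMonoidAlgebra.single_mul_single,
      AddMonoidAlgebra.single_mul_single]
    congr 1
    · simp [natCast_zsmul]
    · ring
  have hsum : ∑ k ∈ Finset.range (N + 1),
      ((-1 : R3) ^ (k + N) * 1 ^ k * (AddMonoidAlgebra.single w (1:ℚ)) ^ (N - k) *
        (N.choose k : R3)).coeff ((n : ℤ) • w) =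
      ∑ k ∈ Finset.range (N + 1),
      (AddMonoidAlgebra.single (((N - k : ℕ) : ℤ) • w)
        ((-1) ^ (k + N) * (N.choose k : ℚ))).coeff ((n : ℤ) • w) :=
    Finset.sum_congr rfl fun l _ => by rw [hterm l]
  rw [hsum]
  rw [Finset.sum_eq_single (N - n)]
  · rw [AddMonoidAlgebra.coeff_single, Finsupp.single_apply, if_pos]
    · have h2 : (-1 : ℚ) ^ (N - n + N) = (-1) ^ n := by
        have h3 : N - n + N = n + 2 * (N - n) := by omega
        rw [h3, pow_add, pow_mul]
        simp
      rw [Nat.choose_symm hn, h2]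
    · congr 1
      omega
  · intro l hl hlne
    rw [AddMonoidAlgebra.coeff_single, Finsupp.single_apply, if_neg]
    intro hEq
    have := congrFun hEq j
    simp only [Pi.smul_apply, smul_eq_mul, hw, mul_one] at this
    rw [Finset.mem_range] at hl
    omega
  · intro h
    exact absurd (Finset.mem_range.mpr (by omega)) h

lemma ct_G (w : Fin 3 → ℤ) (j : Fin 3) (hw : w j = 1) (m n : ℕ) :
    ((1 - AddMonoidAlgebra.single w (1:ℚ)) ^ m *
      (1 - AddMonoidAlgebra.single (-w) (1:ℚ)) ^ n : R3).coeff 0 = ((m + n).choose m : ℚ) := by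
  set u : R3 := AddMonoidAlgebra.single w (1:ℚ) with hu
  set v : R3 := AddMonoidAlgebra.single (-w) (1:ℚ) with hv
  have huv : u * v = 1 := by
    rw [hu, hv, AddMonoidAlgebra.single_mul_single]
    simp [AddMonoidAlgebra.one_def]
  have hsub : (1 - v) = v * (u - 1) := by
    rw [mul_sub, mul_comm v u, huv, mul_one]
  have hfact : (1 - u) ^ m * (1 - v) ^ n =
      AddMonoidAlgebra.single (0 : Fin 3 → ℤ) ((-1 : ℚ) ^ n) *
        (AddMonoidAlgebra.single ((n : ℤ) • (-w)) 1 * (1 - u) ^ (m + n)) := by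
    rw [hsub, mul_pow]
    have hvn : v ^ n = AddMonoidAlgebra.single ((n : ℤ) • (-w)) (1 : ℚ) := by
      rw [hv, AddMonoidAlgebra.single_pow, one_pow, natCast_zsmul]
    have hun : (u - 1) ^ n = AddMonoidAlgebra.single (0 : Fin 3 → ℤ) ((-1 : ℚ) ^ n) *
        (1 - u) ^ n := by
      have h1 : (u - 1) = AddMonoidAlgebra.single (0 : Fin 3 → ℤ) (-1 : ℚ) * (1 - u) := by
        rw [← neg_one_single]; ring
      rw [h1, mul_pow, AddMonoidAlgebra.single_pow]
      simp
    rw [hvn, hun]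
    ring
  rw [hfact, AddMonoidAlgebra.coeff_single_mul_apply,
    AddMonoidAlgebra.coeff_single_mul_apply]
  simp only [neg_zero, add_zero, smul_neg, neg_neg, one_mul]
  rw [apply_pow_one_sub_single w j hw (m + n) n (by omega)]
  have hc : (m + n).choose n = (m + n).choose m := by
    have := Nat.choose_symm (n := m + n) (k := n) (by omega)
    simpa using this.symm
  have hE : ((-1:ℚ))^n * (-1)^n = 1 := by
    rw [← pow_add]
    exact Even.neg_one_pow ⟨n, rfl⟩
  rw [← mul_assoc, hE, one_mul, hc]

lemma choose_div (x y : ℕ) :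
    (((x + y).choose x : ℕ) : ℚ) = ((x + y).factorial : ℚ) / (x.factorial * y.factorial) := by
  have hx : (x.factorial : ℚ) ≠ 0 := by exact_mod_cast x.factorial_ne_zero
  have hy : (y.factorial : ℚ) ≠ 0 := by exact_mod_cast y.factorial_ne_zero
  rw [eq_div_iff (mul_ne_zero hx hy)]
  have := Nat.choose_mul_factorial_mul_factorial (show x ≤ x + y by omega)
  have h2 : (x + y).choose x * x.factorial * y.factorial = (x + y).factorial := by
    simpa [Nat.add_sub_cancel_left] using this
  rw [← mul_assoc]
  exact_mod_cast h2

lemma FF_ct : ∀ (N : ℕ) (a b c : ℕ), a + b + c = N →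
    (FF a b c).coeff 0 = ((a + b + c).factorial : ℚ) /
      ((a.factorial : ℚ) * (b.factorial : ℚ) * (c.factorial : ℚ)) := by
  intro N
  induction N using Nat.strong_induction_on with
  | _ N ih =>
  intro a b c hN
  rcases Nat.eq_zero_or_pos c with hc | hc
  · subst hc
    have hre : FF a b 0 = (ff 0 1 ^ a * ff 1 0 ^ b) *
        ((1 - AddMonoidAlgebra.single (ee 0 - ee 2) (1:ℚ)) ^ a *
          (1 - AddMonoidAlgebra.single (ee 1 - ee 2) (1:ℚ)) ^ b) := by
      unfold FF ff; ring
    rw [hre, ct_boundary 2 _ ?_ _ _ (by decide) (by decide) a b]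
    · have h10 : ff 1 0 = 1 - AddMonoidAlgebra.single (-(ee 0 - ee 1)) (1:ℚ) := by
        unfold ff; rw [neg_sub]
      rw [show (ff 0 1 ^ a * ff 1 0 ^ b).coeff 0 = ((a + b).choose a : ℚ) from by
        rw [h10]; exact ct_G (ee 0 - ee 1) 0 (by decide) a b]
      rw [choose_div]
      norm_num
    · refine supp_mul_le (P := fun v => v 2 = 0) (Q := fun v => v 2 = 0)
        (S := fun v => v 2 = 0) ?_ ?_ ?_
      · intro x y hx hy
        have : (x + y) 2 = x 2 + y 2 := rfl
        omega
      · exact supp_pow_coord 2 (ee 0 - ee 1) (by decide) a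
      · exact supp_pow_coord 2 (ee 1 - ee 0) (by decide) b
  rcases Nat.eq_zero_or_pos b with hb | hb
  · subst hb
    have hre : FF a 0 c = (ff 0 2 ^ a * ff 2 0 ^ c) *
        ((1 - AddMonoidAlgebra.single (ee 0 - ee 1) (1:ℚ)) ^ a *
          (1 - AddMonoidAlgebra.single (ee 2 - ee 1) (1:ℚ)) ^ c) := by
      unfold FF ff; ring
    rw [hre, ct_boundary 1 _ ?_ _ _ (by decide) (by decide) a c]
    · have h20 : ff 2 0 = 1 - AddMonoidAlgebra.single (-(ee 0 - ee 2)) (1:ℚ) := by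
        unfold ff; rw [neg_sub]
      rw [show (ff 0 2 ^ a * ff 2 0 ^ c).coeff 0 = ((a + c).choose a : ℚ) from by
        rw [h20]; exact ct_G (ee 0 - ee 2) 0 (by decide) a c]
      rw [choose_div]
      norm_num
    · refine supp_mul_le (P := fun v => v 1 = 0) (Q := fun v => v 1 = 0)
        (S := fun v => v 1 = 0) ?_ ?_ ?_
      · intro x y hx hy
        have : (x + y) 1 = x 1 + y 1 := rfl
        omega
      · exact supp_pow_coord 1 (ee 0 - ee 2) (by decide) a
      · exact supp_pow_coord 1 (ee 2 - ee 0) (by decide) c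
  rcases Nat.eq_zero_or_pos a with ha | ha
  · subst ha
    have hre : FF 0 b c = (ff 1 2 ^ b * ff 2 1 ^ c) *
        ((1 - AddMonoidAlgebra.single (ee 1 - ee 0) (1:ℚ)) ^ b *
          (1 - AddMonoidAlgebra.single (ee 2 - ee 0) (1:ℚ)) ^ c) := by
      unfold FF ff; ring
    rw [hre, ct_boundary 0 _ ?_ _ _ (by decide) (by decide) b c]
    · have h21 : ff 2 1 = 1 - AddMonoidAlgebra.single (-(ee 1 - ee 2)) (1:ℚ) := by
        unfold ff; rw [neg_sub]
      rw [show (ff 1 2 ^ b * ff 2 1 ^ c).coeff 0 = ((b + c).choose b : ℚ) from by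
        rw [h21]; exact ct_G (ee 1 - ee 2) 1 (by decide) b c]
      rw [choose_div]
      norm_num
    · refine supp_mul_le (P := fun v => v 0 = 0) (Q := fun v => v 0 = 0)
        (S := fun v => v 0 = 0) ?_ ?_ ?_
      · intro x y hx hy
        have : (x + y) 0 = x 0 + y 0 := rfl
        omega
      · exact supp_pow_coord 0 (ee 1 - ee 2) (by decide) b
      · exact supp_pow_coord 0 (ee 2 - ee 1) (by decide) c
  obtain ⟨a', rfl⟩ : ∃ a', a = a' + 1 := ⟨a - 1, by omega⟩
  obtain ⟨b', rfl⟩ : ∃ b', b = b' + 1 := ⟨b - 1, by omega⟩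
  obtain ⟨c', rfl⟩ : ∃ c', c = c' + 1 := ⟨c - 1, by omega⟩
  rw [FF_rec a' b' c', AddMonoidAlgebra.coeff_add, Finsupp.add_apply, AddMonoidAlgebra.coeff_add,
    Finsupp.add_apply]
  rw [ih (a' + (b'+1) + (c'+1)) (by omega) a' (b'+1) (c'+1) rfl,
      ih ((a'+1) + b' + (c'+1)) (by omega) (a'+1) b' (c'+1) rfl,
      ih ((a'+1) + (b'+1) + c') (by omega) (a'+1) (b'+1) c' rfl]
  simp only [show a' + (b'+1) + (c'+1) = a' + b' + c' + 2 from by omega,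
    show (a'+1) + b' + (c'+1) = a' + b' + c' + 2 from by omega,
    show (a'+1) + (b'+1) + c' = a' + b' + c' + 2 from by omega,
    show (a'+1) + (b'+1) + (c'+1) = a' + b' + c' + 3 from by omega]
  have hfa : ∀ k : ℕ, ((k+1).factorial : ℚ) = (k+1) * (k.factorial : ℚ) := by
    intro k
    rw [Nat.factorial_succ]
    push_cast
    ring
  rw [hfa a', hfa b', hfa c', show a' + b' + c' + 3 = (a' + b' + c' + 2) + 1 from rfl,
    hfa (a' + b' + c' + 2)]
  have hA : (a'.factorial : ℚ) ≠ 0 := by exact_mod_cast a'.factorial_ne_zero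
  have hB : (b'.factorial : ℚ) ≠ 0 := by exact_mod_cast b'.factorial_ne_zero
  have hC : (c'.factorial : ℚ) ≠ 0 := by exact_mod_cast c'.factorial_ne_zero
  have hF : (((a' + b' + c' + 2).factorial : ℕ) : ℚ) ≠ 0 := by
    exact_mod_cast (a' + b' + c' + 2).factorial_ne_zero
  have ha1 : ((a' : ℚ) + 1) ≠ 0 := by positivity
  have hb1 : ((b' : ℚ) + 1) ≠ 0 := by positivity
  have hc1 : ((c' : ℚ) + 1) ≠ 0 := by positivity
  push_cast
  field_simp
  ring

end DysonAux

theorem dyson_three_vars (a : ℕ) :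
    ((∏ p ∈ (Finset.univ ×ˢ Finset.univ : Finset (Fin 3 × Fin 3)).filter
          (fun p => p.1 ≠ p.2),
        (1 - AddMonoidAlgebra.single (Pi.single p.1 (1 : ℤ) - Pi.single p.2 (1 : ℤ)) (1 : ℚ)) ^ a :
        AddMonoidAlgebra ℚ (Fin 3 → ℤ)).coeff (0 : Fin 3 → ℤ)) =
      ((3 * a).factorial : ℚ) / ((a.factorial : ℚ) ^ 3) := by
  have hset : ((Finset.univ ×ˢ Finset.univ : Finset (Fin 3 × Fin 3)).filter
      (fun p => p.1 ≠ p.2)) =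
      {((0:Fin 3),(1:Fin 3)), (0,2), (1,0), (1,2), (2,0), (2,1)} := by decide
  have hP : (∏ p ∈ (Finset.univ ×ˢ Finset.univ : Finset (Fin 3 × Fin 3)).filter
        (fun p => p.1 ≠ p.2),
      (1 - AddMonoidAlgebra.single (Pi.single p.1 (1 : ℤ) - Pi.single p.2 (1 : ℤ)) (1 : ℚ)) ^ a :
      AddMonoidAlgebra ℚ (Fin 3 → ℤ)) = FF a a a := by
    rw [hset]
    rw [Finset.prod_insert (by decide), Finset.prod_insert (by decide),
      Finset.prod_insert (by decide), Finset.prod_insert (by decide),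
      Finset.prod_insert (by decide), Finset.prod_singleton]
    unfold FF ff ee
    ring
  rw [hP, FF_ct (a + a + a) a a a rfl]
  rw [show a + a + a = 3 * a from by ring]
  ring
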